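/- Let I ⊆ [0,1] be a set of real numbers satisfying the DCC. Then the set of positive real numbers of the form 2g − 2 + b_1 + … + b_p, where g and p are nonnegative integers and b_1, …, b_p ∈ I, satisfies the DCC. (This is the set 𝒱(1,I) of volumes deg(K_X + B) = 2g − 2 + Σ b_i of one-dimensional semi log canonical models with coefficients in I.) -/

import Mathlib

/-- A set `S ⊆ ℝ` satisfies the descending chain condition (DCC) if every
non-increasing sequence of elements of `S` is eventually constant. -/
def SatisfiesDCC (S : Set ℝ) : Prop :=
  ∀ f : ℕ → ℝ, (∀ n, f n ∈ S) → Antitone f → ∃ N, ∀ m, N ≤ m → f m = f N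

lemma satisfiesDCC_iff_isWF (S : Set ℝ) : SatisfiesDCC S ↔ S.IsWF := by
  constructor
  · intro h
    rw [Set.isWF_iff_no_descending_seq]
    intro f hf hmem
    obtain ⟨N, hN⟩ := h f (fun n => hmem n) hf.antitone
    exact absurd (hN (N + 1) (Nat.le_succ N)) (hf (Nat.lt_succ_self N)).ne
  · intro h f hmem hf
    have hr : Set.range f ⊆ S := by rintro _ ⟨n, rfl⟩; exact hmem n
    have hwf : (Set.range f).IsWF := h.mono hr
    have hne : (Set.range f).Nonempty := ⟨f 0, 0, rfl⟩
    obtain ⟨N, hN⟩ := hwf.min_mem hne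
    refine ⟨N, fun m hm => ?_⟩
    have h1 : f m ≤ f N := hf hm
    have h2 : ¬ f m < hwf.min hne := hwf.not_lt_min hne ⟨m, rfl⟩
    rw [← hN] at h2
    exact le_antisymm h1 (not_lt.mp h2)

theorem stmt_2 (I : Set ℝ) (hI : I ⊆ Set.Icc 0 1) (hIdcc : SatisfiesDCC I) :
    SatisfiesDCC {x : ℝ | 0 < x ∧ ∃ (g p : ℕ) (b : Fin p → ℝ),
      (∀ j, b j ∈ I) ∧ x = 2 * (g : ℝ) - 2 + ∑ j, b j} := by
  rw [satisfiesDCC_iff_isWF]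
  rw [← Set.isPWO_iff_isWF]
  -- the set D of values 2g-2
  have hD : (Set.range (fun g : ℕ => 2 * (g : ℝ) - 2)).IsPWO := by
    have hu : (Set.univ : Set ℕ).IsPWO :=
      (Set.isWF_univ_iff.mpr (inferInstance : WellFoundedLT ℕ)).isPWO
    have := hu.image_of_monotone (f := fun g : ℕ => 2 * (g : ℝ) - 2)
      (fun a b hab => by
        simp only
        have : (a : ℝ) ≤ b := Nat.cast_le.mpr hab
        linarith)
    simpa [Set.image_univ] using this
  have hC : (AddSubmonoid.closure I : Set ℝ).IsPWO := by
    refine Set.IsPWO.addSubmonoid_closure (fun x hx => (hI hx).1) ?_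
    rw [Set.isPWO_iff_isWF, ← satisfiesDCC_iff_isWF]
    exact hIdcc
  refine Set.IsPWO.mono (hD.add hC) ?_
  rintro x ⟨-, g, p, b, hb, rfl⟩
  exact Set.add_mem_add ⟨g, rfl⟩ (sum_mem (fun j _ => AddSubmonoid.subset_closure (hb j)))
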